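/- arXiv:1607.00929 — 5 statements merged into one kernel-verified Lean document; each statement's English description precedes it below -/
import Mathlib

section
/- Let N ∈ ℕ, R > 0, s > 0, r > 0, and ε ∈ (0, min{N, s}). Then R^{2s-N} ∫_0^{r/R²} t^{s-1}/(t+1)^{N/2} dt ≤ (2/s) · R^{ε-N} · r^{s-ε/2}. -/
open MeasureTheory

theorem boggio_kernel_integral_bound
    (N : ℕ) (hN : 0 < N) (R s r ε : ℝ) (hR : 0 < R) (hs : 0 < s) (hr : 0 < r)
    (hε : 0 < ε) (hεmin : ε < min (N : ℝ) s) :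
    R ^ (2 * s - N) * ∫ t in (0:ℝ)..(r / R ^ 2), t ^ (s - 1) / (t + 1) ^ ((N : ℝ) / 2) ≤
      2 / s * R ^ (ε - N) * r ^ (s - ε / 2) := by
  have hεN : ε < (N : ℝ) := lt_of_lt_of_le hεmin (min_le_left _ _)
  have hεs : ε < s := lt_of_lt_of_le hεmin (min_le_right _ _)
  set a : ℝ := r / R ^ 2 with ha
  have haPos : 0 < a := div_pos hr (by positivity)
  set p : ℝ := s - ε / 2 with hp
  have hpPos : 0 < p := by simp only [hp]; linarith
  -- integrability of the power function
  have hgInt : IntervalIntegrable (fun t : ℝ => t ^ (p - 1)) volume 0 a :=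
    intervalIntegral.intervalIntegrable_rpow' (by linarith)
  have hg1Int : IntervalIntegrable (fun t : ℝ => t ^ (s - 1)) volume 0 a :=
    intervalIntegral.intervalIntegrable_rpow' (by linarith)
  -- integrability of f
  have hfInt : IntervalIntegrable
      (fun t : ℝ => t ^ (s - 1) / (t + 1) ^ ((N : ℝ) / 2)) volume 0 a := by
    apply hg1Int.mono_fun
    · exact ((measurable_id.pow_const (s - 1)).div
        ((measurable_id.add_const 1).pow_const ((N : ℝ) / 2))).aestronglyMeasurable
    · have hmem : ∀ᵐ t ∂(volume.restrict (Set.uIoc (0:ℝ) a)), t ∈ Set.uIoc (0:ℝ) a :=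
        ae_restrict_mem measurableSet_uIoc
      filter_upwards [hmem] with t ht
      rw [Set.uIoc_of_le haPos.le] at ht
      have ht0 : 0 < t := ht.1
      have h1 : (1 : ℝ) ≤ (t + 1) ^ ((N : ℝ) / 2) :=
        Real.one_le_rpow (by linarith) (by positivity)
      have hnum : 0 ≤ t ^ (s - 1) := Real.rpow_nonneg ht0.le _
      rw [Real.norm_eq_abs, Real.norm_eq_abs, abs_of_nonneg (by positivity),
        abs_of_nonneg hnum]
      calc t ^ (s - 1) / (t + 1) ^ ((N : ℝ) / 2) ≤ t ^ (s - 1) / 1 :=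
            div_le_div_of_nonneg_left hnum (by positivity) h1 |>.trans_eq rfl
        _ = t ^ (s - 1) := div_one _
  -- pointwise (a.e.) comparison
  have h0 : ∀ᵐ t : ℝ ∂volume, t ≠ 0 := by
    rw [ae_iff]
    simp [measure_singleton (0 : ℝ)]
  have hmono : (∫ t in (0:ℝ)..a, t ^ (s - 1) / (t + 1) ^ ((N : ℝ) / 2)) ≤
      ∫ t in (0:ℝ)..a, t ^ (p - 1) := by
    apply intervalIntegral.integral_mono_ae_restrict haPos.le hfInt hgInt
    have hmem := ae_restrict_mem (μ := volume) (measurableSet_Icc (a := (0:ℝ)) (b := a))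
    filter_upwards [hmem, h0.filter_mono (ae_mono Measure.restrict_le_self)] with t ht htne
    have ht0 : 0 < t := lt_of_le_of_ne ht.1 (Ne.symm htne)
    have h1 : t ^ (ε / 2) ≤ (t + 1) ^ ((N : ℝ) / 2) := by
      calc t ^ (ε / 2) ≤ (t + 1) ^ (ε / 2) :=
            Real.rpow_le_rpow ht0.le (by linarith) (by positivity)
        _ ≤ (t + 1) ^ ((N : ℝ) / 2) :=
            Real.rpow_le_rpow_of_exponent_le (by linarith) (by linarith)
    have hεt : 0 < t ^ (ε / 2) := Real.rpow_pos_of_pos ht0 _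
    calc t ^ (s - 1) / (t + 1) ^ ((N : ℝ) / 2) ≤ t ^ (s - 1) / t ^ (ε / 2) :=
          div_le_div_of_nonneg_left (Real.rpow_nonneg ht0.le _) hεt h1
      _ = t ^ (p - 1) := by
          rw [← Real.rpow_sub ht0, hp]; ring_nf
  -- compute the majorizing integral
  have hval : (∫ t in (0:ℝ)..a, t ^ (p - 1)) = a ^ p / p := by
    rw [integral_rpow (Or.inl (by linarith))]
    rw [Real.zero_rpow (by linarith), sub_add_cancel]
    ring
  have hbound : (∫ t in (0:ℝ)..a, t ^ (s - 1) / (t + 1) ^ ((N : ℝ) / 2)) ≤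
      2 / s * a ^ p := by
    refine hmono.trans ?_
    rw [hval]
    have hap : 0 ≤ a ^ p := Real.rpow_nonneg haPos.le _
    calc a ^ p / p ≤ a ^ p / (s / 2) :=
          div_le_div_of_nonneg_left hap (by linarith) (by simp only [hp]; linarith)
      _ = 2 / s * a ^ p := by field_simp
  -- rewrite a ^ p
  have harw : a ^ p = r ^ p * R ^ (ε - 2 * s) := by
    rw [ha, Real.div_rpow hr.le (by positivity)]
    rw [← Real.rpow_natCast R 2, ← Real.rpow_mul hR.le]
    rw [div_eq_mul_inv, ← Real.rpow_neg hR.le]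
    congr 1
    push_cast
    simp only [hp]; ring
  calc R ^ (2 * s - N) * ∫ t in (0:ℝ)..a, t ^ (s - 1) / (t + 1) ^ ((N : ℝ) / 2)
      ≤ R ^ (2 * s - N) * (2 / s * a ^ p) := by
        apply mul_le_mul_of_nonneg_left hbound (Real.rpow_nonneg hR.le _)
    _ = 2 / s * R ^ (ε - N) * r ^ p := by
        have hRR : R ^ (2 * s - (N : ℝ)) * R ^ (ε - 2 * s) = R ^ (ε - (N : ℝ)) := by
          rw [← Real.rpow_add hR]; ring_nf
        rw [harw, ← hRR]; ring
end

section
/- Let N ∈ ℕ, y ∈ ℝ^N with |y| < 1, θ ∈ ℝ^N with |θ| = 1, and r ∈ (3/4, 1]. Then |r·y − θ|² ≥ |y − θ|²/2. -/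
theorem bracket_boundary_estimate
    (N : ℕ) (y θ : EuclideanSpace ℝ (Fin N)) (hy : ‖y‖ < 1) (hθ : ‖θ‖ = 1)
    (r : ℝ) (hr : r ∈ Set.Ioc (3/4 : ℝ) 1) :
    ‖y - θ‖ ^ 2 / 2 ≤ ‖r • y - θ‖ ^ 2 := by
  obtain ⟨hr1, hr2⟩ := hr
  have h1 : ‖y - θ‖ ^ 2 = ‖y‖ ^ 2 - 2 * inner ℝ y θ + ‖θ‖ ^ 2 := norm_sub_sq_real y θ
  have h2 : ‖r • y - θ‖ ^ 2 = ‖r • y‖ ^ 2 - 2 * inner ℝ (r • y) θ + ‖θ‖ ^ 2 :=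
    norm_sub_sq_real _ θ
  have h3 : (inner ℝ (r • y) θ : ℝ) = r * inner ℝ y θ := real_inner_smul_left y θ r
  have h4 : ‖r • y‖ = |r| * ‖y‖ := norm_smul r y
  have h5 : |r| = r := abs_of_pos (by linarith)
  have hb : |(inner ℝ y θ : ℝ)| ≤ ‖y‖ := by
    have := abs_real_inner_le_norm y θ
    rw [hθ, mul_one] at this; exact this
  have hb1 : (inner ℝ y θ : ℝ) ≤ ‖y‖ := (abs_le.mp hb).2
  have ha : 0 ≤ ‖y‖ := norm_nonneg y
  set a := ‖y‖ with haa
  set b := (inner ℝ y θ : ℝ) with hbb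
  have h6 : 0 ≤ (r - 1/2) * (a - b) :=
    mul_nonneg (by linarith) (by linarith)
  have hrr : (0:ℝ) ≤ 2*r^2 - 1 := by nlinarith
  have hbr : 0 ≤ 2*(2*r - 1) - (2*r^2 - 1)*(a + 1) := by
    nlinarith [mul_nonneg (by linarith : (0:ℝ) ≤ 1 - a) hrr]
  have h7 : 0 ≤ (1 - a) * (2*(2*r - 1) - (2*r^2 - 1)*(a + 1)) :=
    mul_nonneg (by linarith) hbr
  rw [h1, h2, h3, h4, h5, hθ]
  nlinarith [h6, h7, sq_nonneg (r - 1)]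
end

section
/- Let N ∈ ℕ, s > 0, and define for x, y ∈ ℝ^N with x ≠ y: ρ(x,y) := (1−|x|²)₊(1−|y|²)₊ / |x−y|², and G_s(x,y) := k_{N,s} |x−y|^{2s−N} ∫_0^{ρ(x,y)} v^{s−1}(v+1)^{−N/2} dv with k_{N,s} = Γ(N/2)/(π^{N/2} 4^s Γ(s)²). Then for every x in the open unit ball B and every θ with |θ| = 1, the limit lim_{z→θ, z∈B} G_s(x,z)/(1−|z|²)^s exists and equals (k_{N,s}/s) · (1−|x|²)^s / |θ−x|^N. -/
open MeasureTheory

/-- The quantity `ρ(x,y) = (1-|x|²)₊(1-|y|²)₊ / |x-y|²` from Boggio's formula. -/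
noncomputable def boggioRho {N : ℕ} (x y : EuclideanSpace ℝ (Fin N)) : ℝ :=
  (max (1 - ‖x‖ ^ 2) 0) * (max (1 - ‖y‖ ^ 2) 0) / ‖x - y‖ ^ 2

/-- The constant `k_{N,s} = Γ(N/2)/(π^{N/2} 4^s Γ(s)²)` in Boggio's formula. -/
noncomputable def boggioConst (N : ℕ) (s : ℝ) : ℝ :=
  Real.Gamma ((N : ℝ) / 2) / (Real.pi ^ ((N : ℝ) / 2) * 4 ^ s * (Real.Gamma s) ^ 2)

/-- Boggio's Green function for `(-Δ)^s` in the unit ball. -/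
noncomputable def boggioG (N : ℕ) (s : ℝ) (x y : EuclideanSpace ℝ (Fin N)) : ℝ :=
  boggioConst N s * ‖x - y‖ ^ (2 * s - N) *
    ∫ v in (0:ℝ)..(boggioRho x y), v ^ (s - 1) * (v + 1) ^ (-((N : ℝ) / 2))

-- Lemma A: bounds for the integral
lemma boggio_integral_bounds (N : ℕ) (s : ℝ) (hs : 0 < s) {r : ℝ} (hr : 0 < r) :
    (1 + r) ^ (-((N : ℝ) / 2)) * (r ^ s / s) ≤
      (∫ v in (0:ℝ)..r, v ^ (s - 1) * (v + 1) ^ (-((N : ℝ) / 2))) ∧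
    (∫ v in (0:ℝ)..r, v ^ (s - 1) * (v + 1) ^ (-((N : ℝ) / 2))) ≤ r ^ s / s := by
  have hs1 : (-1 : ℝ) < s - 1 := by linarith
  have hint : IntervalIntegrable (fun v : ℝ => v ^ (s - 1)) volume 0 r :=
    intervalIntegral.intervalIntegrable_rpow' hs1
  have huIcc : Set.uIcc (0:ℝ) r = Set.Icc 0 r := Set.uIcc_of_le hr.le
  have hcont : ContinuousOn (fun v : ℝ => (v + 1) ^ (-((N : ℝ) / 2))) (Set.uIcc (0:ℝ) r) := by
    apply ContinuousOn.rpow_const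
    · exact (continuous_id.add continuous_const).continuousOn
    · intro v hv
      rw [huIcc] at hv
      exact Or.inl (by nlinarith [hv.1])
  have hint2 : IntervalIntegrable
      (fun v : ℝ => v ^ (s - 1) * (v + 1) ^ (-((N : ℝ) / 2))) volume 0 r :=
    hint.mul_continuousOn hcont
  have hval : (∫ v in (0:ℝ)..r, v ^ (s - 1)) = r ^ s / s := by
    rw [integral_rpow (Or.inl hs1)]
    rw [Real.zero_rpow (by linarith : s - 1 + 1 ≠ 0)]
    rw [sub_add_cancel]
    ring
  constructor
  · have hval2 : (∫ v in (0:ℝ)..r, v ^ (s - 1) * (1 + r) ^ (-((N : ℝ) / 2)))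
        = (1 + r) ^ (-((N : ℝ) / 2)) * (r ^ s / s) := by
      rw [intervalIntegral.integral_mul_const, hval]; ring
    rw [← hval2]
    apply intervalIntegral.integral_mono_on hr.le (hint.mul_const _) hint2
    intro v hv
    apply mul_le_mul_of_nonneg_left _ (Real.rpow_nonneg hv.1 _)
    apply Real.rpow_le_rpow_of_nonpos (by linarith [hv.1]) (by linarith [hv.2])
    have : (0:ℝ) ≤ (N : ℝ) / 2 := by positivity
    linarith
  · rw [← hval]
    apply intervalIntegral.integral_mono_on hr.le hint2 hint
    intro v hv
    have h1 : (v + 1) ^ (-((N : ℝ) / 2)) ≤ 1 := by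
      apply Real.rpow_le_one_of_one_le_of_nonpos (by linarith [hv.1])
      have : (0:ℝ) ≤ (N : ℝ) / 2 := by positivity
      linarith
    calc v ^ (s - 1) * (v + 1) ^ (-((N : ℝ) / 2)) ≤ v ^ (s - 1) * 1 :=
        mul_le_mul_of_nonneg_left h1 (Real.rpow_nonneg hv.1 _)
      _ = v ^ (s - 1) := mul_one _

-- Lemma B: the ratio tends to 1/s
lemma boggio_ratio_tendsto (N : ℕ) (s : ℝ) (hs : 0 < s) :
    Filter.Tendsto
      (fun r : ℝ => (∫ v in (0:ℝ)..r, v ^ (s - 1) * (v + 1) ^ (-((N : ℝ) / 2))) / r ^ s)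
      (nhdsWithin 0 (Set.Ioi 0)) (nhds (1 / s)) := by
  apply tendsto_of_tendsto_of_tendsto_of_le_of_le'
    (g := fun r : ℝ => (1 + r) ^ (-((N : ℝ) / 2)) * (1 / s)) (h := fun _ => 1 / s)
  · have : Filter.Tendsto (fun r : ℝ => (1 + r) ^ (-((N : ℝ) / 2)) * (1 / s)) (nhds 0)
        (nhds ((1 + 0) ^ (-((N : ℝ) / 2)) * (1 / s))) := by
      apply Filter.Tendsto.mul_const
      apply Filter.Tendsto.rpow_const (by
        simpa using (continuous_add_left (1:ℝ)).tendsto (0:ℝ))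
      exact Or.inl (by norm_num)
    simpa using this.mono_left nhdsWithin_le_nhds
  · exact tendsto_const_nhds
  · filter_upwards [self_mem_nhdsWithin] with r hr
    have hr : (0:ℝ) < r := hr
    have hrs : (0:ℝ) < r ^ s := Real.rpow_pos_of_pos hr s
    rw [le_div_iff₀ hrs]
    calc (1 + r) ^ (-((N : ℝ) / 2)) * (1 / s) * r ^ s
        = (1 + r) ^ (-((N : ℝ) / 2)) * (r ^ s / s) := by ring
      _ ≤ _ := (boggio_integral_bounds N s hs hr).1
  · filter_upwards [self_mem_nhdsWithin] with r hr
    have hr : (0:ℝ) < r := hr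
    have hrs : (0:ℝ) < r ^ s := Real.rpow_pos_of_pos hr s
    rw [div_le_iff₀ hrs]
    calc (∫ v in (0:ℝ)..r, v ^ (s - 1) * (v + 1) ^ (-((N : ℝ) / 2))) ≤ r ^ s / s :=
        (boggio_integral_bounds N s hs hr).2
      _ = 1 / s * r ^ s := by ring

theorem martin_kernel_limit
    (N : ℕ) (hN : 0 < N) (s : ℝ) (hs : 0 < s)
    (x : EuclideanSpace ℝ (Fin N)) (hx : x ∈ Metric.ball (0 : EuclideanSpace ℝ (Fin N)) 1)
    (θ : EuclideanSpace ℝ (Fin N)) (hθ : ‖θ‖ = 1) :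
    Filter.Tendsto (fun z : EuclideanSpace ℝ (Fin N) => boggioG N s x z / (1 - ‖z‖ ^ 2) ^ s)
      (nhdsWithin θ (Metric.ball (0 : EuclideanSpace ℝ (Fin N)) 1))
      (nhds (boggioConst N s / s * (1 - ‖x‖ ^ 2) ^ s / ‖θ - x‖ ^ (N : ℝ))) := by
  have hxn : ‖x‖ < 1 := by simpa using mem_ball_zero_iff.mp hx
  have hX : 0 < 1 - ‖x‖ ^ 2 := by nlinarith [norm_nonneg x]
  have hxθ : x ≠ θ := fun h => by rw [h, hθ] at hxn; exact lt_irrefl 1 hxn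
  have hθx : 0 < ‖x - θ‖ := norm_pos_iff.mpr (sub_ne_zero.mpr hxθ)
  have hne : ∀ᶠ z in nhdsWithin θ (Metric.ball (0 : EuclideanSpace ℝ (Fin N)) 1), z ≠ x :=
    (eventually_ne_nhds (Ne.symm hxθ)).filter_mono nhdsWithin_le_nhds
  -- continuity of z ↦ ‖x - z‖
  have hcA : Filter.Tendsto (fun z : EuclideanSpace ℝ (Fin N) => ‖x - z‖)
      (nhdsWithin θ (Metric.ball 0 1)) (nhds ‖x - θ‖) :=
    (((continuous_const.sub continuous_id).norm).tendsto θ).mono_left nhdsWithin_le_nhds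
  -- rho tends to 0 within Ioi 0
  have htρ : Filter.Tendsto (fun z : EuclideanSpace ℝ (Fin N) => boggioRho x z)
      (nhdsWithin θ (Metric.ball 0 1)) (nhdsWithin 0 (Set.Ioi 0)) := by
    rw [tendsto_nhdsWithin_iff]
    constructor
    · have hnum : Filter.Tendsto
          (fun z : EuclideanSpace ℝ (Fin N) =>
            max (1 - ‖x‖ ^ 2) 0 * max (1 - ‖z‖ ^ 2) 0)
          (nhds θ) (nhds (max (1 - ‖x‖ ^ 2) 0 * max (1 - ‖θ‖ ^ 2) 0)) := by
        exact (continuous_const.mul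
          ((continuous_const.sub (continuous_norm.pow 2)).max continuous_const)).tendsto θ
      have hden : Filter.Tendsto
          (fun z : EuclideanSpace ℝ (Fin N) => ‖x - z‖ ^ 2)
          (nhds θ) (nhds (‖x - θ‖ ^ 2)) :=
        (((continuous_const.sub continuous_id).norm.pow 2)).tendsto θ
      have := hnum.div hden (by positivity)
      rw [hθ] at this
      simp only [one_pow, sub_self, max_self, mul_zero, zero_div] at this
      simpa [boggioRho, Pi.div_def] using this.mono_left nhdsWithin_le_nhds
    · filter_upwards [self_mem_nhdsWithin, hne] with z hz hzx
      have hzn : ‖z‖ < 1 := by simpa using mem_ball_zero_iff.mp hz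
      have hD : 0 < 1 - ‖z‖ ^ 2 := by nlinarith [norm_nonneg z]
      have hA : 0 < ‖x - z‖ := norm_pos_iff.mpr (sub_ne_zero.mpr (Ne.symm hzx))
      simp only [boggioRho, Set.mem_Ioi, max_eq_left hX.le, max_eq_left hD.le]
      positivity
  -- the auxiliary product converges
  have hT1 : Filter.Tendsto (fun z : EuclideanSpace ℝ (Fin N) => ‖x - z‖ ^ (-(N : ℝ)))
      (nhdsWithin θ (Metric.ball 0 1)) (nhds (‖x - θ‖ ^ (-(N : ℝ)))) :=
    hcA.rpow_const (Or.inl hθx.ne')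
  have hT2 : Filter.Tendsto
      (fun z : EuclideanSpace ℝ (Fin N) =>
        (∫ v in (0:ℝ)..(boggioRho x z), v ^ (s - 1) * (v + 1) ^ (-((N : ℝ) / 2))) /
          (boggioRho x z) ^ s)
      (nhdsWithin θ (Metric.ball 0 1)) (nhds (1 / s)) :=
    (boggio_ratio_tendsto N s hs).comp htρ
  have hTF : Filter.Tendsto
      (fun z : EuclideanSpace ℝ (Fin N) =>
        boggioConst N s * (1 - ‖x‖ ^ 2) ^ s * ‖x - z‖ ^ (-(N : ℝ)) *
          ((∫ v in (0:ℝ)..(boggioRho x z), v ^ (s - 1) * (v + 1) ^ (-((N : ℝ) / 2))) /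
            (boggioRho x z) ^ s))
      (nhdsWithin θ (Metric.ball 0 1))
      (nhds (boggioConst N s * (1 - ‖x‖ ^ 2) ^ s * ‖x - θ‖ ^ (-(N : ℝ)) * (1 / s))) :=
    (tendsto_const_nhds.mul hT1).mul hT2
  -- identify the limit value
  have hval : boggioConst N s * (1 - ‖x‖ ^ 2) ^ s * ‖x - θ‖ ^ (-(N : ℝ)) * (1 / s)
      = boggioConst N s / s * (1 - ‖x‖ ^ 2) ^ s / ‖θ - x‖ ^ (N : ℝ) := by
    rw [norm_sub_rev x θ, Real.rpow_neg (norm_nonneg _)]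
    have hθx' : (0:ℝ) < ‖θ - x‖ := by rw [norm_sub_rev]; exact hθx
    have h0 : (‖θ - x‖ : ℝ) ^ (N : ℝ) ≠ 0 := (Real.rpow_pos_of_pos hθx' _).ne'
    field_simp
  rw [← hval]
  -- eventual equality
  apply hTF.congr'
  filter_upwards [self_mem_nhdsWithin, hne] with z hz hzx
  have hzn : ‖z‖ < 1 := by simpa using mem_ball_zero_iff.mp hz
  have hD : 0 < 1 - ‖z‖ ^ 2 := by nlinarith [norm_nonneg z]
  have hA : 0 < ‖x - z‖ := norm_pos_iff.mpr (sub_ne_zero.mpr (Ne.symm hzx))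
  have hρ : boggioRho x z = (1 - ‖x‖ ^ 2) * (1 - ‖z‖ ^ 2) / ‖x - z‖ ^ 2 := by
    simp [boggioRho, max_eq_left hX.le, max_eq_left hD.le]
  set A := ‖x - z‖ with hAdef
  set D := 1 - ‖z‖ ^ 2 with hDdef
  set X := 1 - ‖x‖ ^ 2 with hXdef
  set I := ∫ v in (0:ℝ)..(boggioRho x z), v ^ (s - 1) * (v + 1) ^ (-((N : ℝ) / 2)) with hIdef
  show boggioConst N s * X ^ s * A ^ (-(N : ℝ)) * (I / (boggioRho x z) ^ s)
      = boggioG N s x z / D ^ s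
  rw [boggioG, ← hIdef, ← hAdef]
  have hρpow : (boggioRho x z) ^ s = X ^ s * D ^ s / A ^ (2 * s) := by
    rw [hρ, Real.div_rpow (by positivity) (by positivity), Real.mul_rpow hX.le hD.le]
    congr 1
    rw [← Real.rpow_natCast A 2, ← Real.rpow_mul hA.le]
    norm_num [mul_comm]
  have hApow : A ^ (2 * s - (N : ℝ)) = A ^ (2 * s) * A ^ (-(N : ℝ)) := by
    rw [sub_eq_add_neg, Real.rpow_add hA]
  rw [hρpow, hApow]
  have h1 : X ^ s ≠ 0 := (Real.rpow_pos_of_pos hX _).ne'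
  have h2 : D ^ s ≠ 0 := (Real.rpow_pos_of_pos hD _).ne'
  have h3 : A ^ (2 * s) ≠ 0 := (Real.rpow_pos_of_pos hA _).ne'
  field_simp
end

section
/- Let N ∈ ℕ, s > 0, and C_s := sup_{x∈ℝ^N, |x|≥2} ∫_{|y|≥1} (1+|x|^{N+2s}) / ((1+|x+y|^{N+2s}) |y|^{N+2s}) dy. Then C_s < ∞; that is, there is a constant C = C(N,s) such that for all x with |x| ≥ 2, ∫_{|y|≥1} (1+|x|^{N+2s}) / ((1+|x+y|^{N+2s})|y|^{N+2s}) dy ≤ C. -/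
open MeasureTheory

private lemma pointwise_aux (p a u t : ℝ) (hp : 0 < p) (ha : 2 ≤ a) (hu : 0 ≤ u)
    (ht : 1 ≤ t) (htri : a ≤ u + t) :
    (1 + a ^ p) / ((1 + u ^ p) * t ^ p) ≤ 2 ^ p / t ^ p + 2 ^ (p + 1) / (1 + u ^ p) := by
  have ha0 : (0 : ℝ) < a := by linarith
  have ht0 : (0 : ℝ) < t := by linarith
  have hap : (0 : ℝ) < a ^ p := Real.rpow_pos_of_pos ha0 p
  have htp : (0 : ℝ) < t ^ p := Real.rpow_pos_of_pos ht0 p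
  have hup : (0 : ℝ) ≤ u ^ p := Real.rpow_nonneg hu p
  have h2p : (1 : ℝ) ≤ 2 ^ p := Real.one_le_rpow (by norm_num) hp.le
  have h2p0 : (0 : ℝ) < 2 ^ p := by linarith
  rcases le_or_gt (a / 2) u with hA | hA
  · -- |x+y| ≥ |x|/2
    have hxle : a ^ p ≤ 2 ^ p * u ^ p := by
      calc a ^ p ≤ (2 * u) ^ p := Real.rpow_le_rpow ha0.le (by linarith) hp.le
        _ = 2 ^ p * u ^ p := Real.mul_rpow (by norm_num) hu
    have step : (1 + a ^ p) / ((1 + u ^ p) * t ^ p)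
        ≤ ((1 + u ^ p) * 2 ^ p) / ((1 + u ^ p) * t ^ p) := by
      apply div_le_div_of_nonneg_right ?_ (by positivity)
      nlinarith
    have heq : ((1 + u ^ p) * 2 ^ p) / ((1 + u ^ p) * t ^ p) = 2 ^ p / t ^ p :=
      mul_div_mul_left _ _ (by positivity)
    have hnn : (0 : ℝ) ≤ 2 ^ (p + 1) / (1 + u ^ p) := by positivity
    calc (1 + a ^ p) / ((1 + u ^ p) * t ^ p) ≤ 2 ^ p / t ^ p := heq ▸ step
      _ ≤ 2 ^ p / t ^ p + 2 ^ (p + 1) / (1 + u ^ p) := by linarith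
  · -- |x+y| < |x|/2, hence |y| > |x|/2
    have hta : a / 2 < t := by linarith
    have h2a : 2 ^ p ≤ a ^ p := Real.rpow_le_rpow (by norm_num) ha hp.le
    have htX : a ^ p / 2 ^ p ≤ t ^ p := by
      calc a ^ p / 2 ^ p = (a / 2) ^ p := (Real.div_rpow ha0.le (by norm_num : (0:ℝ) ≤ 2) p).symm
        _ ≤ t ^ p := Real.rpow_le_rpow (by positivity) hta.le hp.le
    have step : (1 + a ^ p) / ((1 + u ^ p) * t ^ p)
        ≤ (2 * a ^ p) / ((1 + u ^ p) * (a ^ p / 2 ^ p)) := by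
      apply div_le_div₀ (by positivity) (by nlinarith) (by positivity) ?_
      apply mul_le_mul_of_nonneg_left htX (by positivity)
    have heq : (2 * a ^ p) / ((1 + u ^ p) * (a ^ p / 2 ^ p)) = 2 ^ (p + 1) / (1 + u ^ p) := by
      rw [Real.rpow_add_one (by norm_num : (2:ℝ) ≠ 0) p]
      field_simp
    have hnn : (0 : ℝ) ≤ 2 ^ p / t ^ p := by positivity
    calc (1 + a ^ p) / ((1 + u ^ p) * t ^ p) ≤ 2 ^ (p + 1) / (1 + u ^ p) := heq ▸ step
      _ ≤ 2 ^ p / t ^ p + 2 ^ (p + 1) / (1 + u ^ p) := by linarith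

private lemma one_add_rpow_comp (p t : ℝ) (hp : 0 < p) (ht : 0 ≤ t) :
    (1 + t) ^ p ≤ 2 ^ p * (1 + t ^ p) := by
  have htp : (0 : ℝ) ≤ t ^ p := Real.rpow_nonneg ht p
  have h2p : (0 : ℝ) < 2 ^ p := Real.rpow_pos_of_pos (by norm_num) p
  rcases le_total t 1 with h | h
  · calc (1 + t) ^ p ≤ 2 ^ p := Real.rpow_le_rpow (by linarith) (by linarith) hp.le
      _ ≤ 2 ^ p * (1 + t ^ p) := le_mul_of_one_le_right h2p.le (by linarith)
  · calc (1 + t) ^ p ≤ (2 * t) ^ p := Real.rpow_le_rpow (by linarith) (by linarith) hp.le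
      _ = 2 ^ p * t ^ p := Real.mul_rpow (by norm_num) ht
      _ ≤ 2 ^ p * (1 + t ^ p) := by nlinarith

theorem uniform_weighted_integral_bound
    (N : ℕ) (hN : 0 < N) (s : ℝ) (hs : 0 < s) :
    ∃ C : ℝ, ∀ x : EuclideanSpace ℝ (Fin N), 2 ≤ ‖x‖ →
      (∫ y in {y : EuclideanSpace ℝ (Fin N) | 1 ≤ ‖y‖},
          (1 + ‖x‖ ^ ((N : ℝ) + 2 * s)) /
            ((1 + ‖x + y‖ ^ ((N : ℝ) + 2 * s)) * ‖y‖ ^ ((N : ℝ) + 2 * s))) ≤ C := by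
  set E := EuclideanSpace ℝ (Fin N)
  set p : ℝ := (N : ℝ) + 2 * s with hp_def
  have hp0 : 0 < p := by positivity
  have hNp : (Module.finrank ℝ E : ℝ) < p := by
    rw [finrank_euclideanSpace_fin]
    have : 0 < 2 * s := by linarith
    simp only [hp_def]; linarith
  have h2p : (0 : ℝ) < 2 ^ p := Real.rpow_pos_of_pos (by norm_num) p
  set S : Set E := {y : E | 1 ≤ ‖y‖} with hS_def
  have hSmeas : MeasurableSet S := (isClosed_le continuous_const continuous_norm).measurableSet
  have hbase : Integrable (fun z : E => (1 + ‖z‖) ^ (-p)) := integrable_one_add_norm hNp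
  -- integrability of the first dominating piece on S
  have h1 : IntegrableOn (fun y : E => 2 ^ p / ‖y‖ ^ p) S := by
    refine ((hbase.const_mul (2 ^ p * 2 ^ p)).integrableOn).mono'
      (Measurable.aestronglyMeasurable (by fun_prop)) ?_
    refine (ae_restrict_iff' hSmeas).mpr (Filter.Eventually.of_forall fun y hy => ?_)
    have hy1 : (1 : ℝ) ≤ ‖y‖ := hy
    have hy0 : (0 : ℝ) < ‖y‖ := by linarith
    have hyp : (0 : ℝ) < ‖y‖ ^ p := Real.rpow_pos_of_pos hy0 p
    have h1y : (0 : ℝ) < (1 + ‖y‖) ^ p := Real.rpow_pos_of_pos (by linarith) p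
    rw [Real.norm_of_nonneg (by positivity), Real.rpow_neg (by positivity),
      ← div_eq_mul_inv, div_le_div_iff₀ hyp h1y]
    have key : (1 + ‖y‖) ^ p ≤ 2 ^ p * ‖y‖ ^ p := by
      calc (1 + ‖y‖) ^ p ≤ (2 * ‖y‖) ^ p :=
            Real.rpow_le_rpow (by linarith) (by linarith) hp0.le
        _ = 2 ^ p * ‖y‖ ^ p := Real.mul_rpow (by norm_num) hy0.le
    nlinarith
  -- integrability of the second dominating piece on all of E
  have h2 : Integrable (fun z : E => 2 ^ (p + 1) / (1 + ‖z‖ ^ p)) := by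
    refine (hbase.const_mul (2 ^ (p + 1) * 2 ^ p)).mono'
      (Measurable.aestronglyMeasurable (by fun_prop)) (Filter.Eventually.of_forall fun z => ?_)
    have hzp : (0 : ℝ) ≤ ‖z‖ ^ p := Real.rpow_nonneg (norm_nonneg _) p
    have h1z : (0 : ℝ) < (1 + ‖z‖) ^ p := Real.rpow_pos_of_pos (by positivity) p
    have h2p1 : (0 : ℝ) < 2 ^ (p + 1) := Real.rpow_pos_of_pos (by norm_num) _
    rw [Real.norm_of_nonneg (by positivity), Real.rpow_neg (by positivity),
      ← div_eq_mul_inv, div_le_div_iff₀ (by positivity) h1z]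
    have key := one_add_rpow_comp p ‖z‖ hp0 (norm_nonneg _)
    nlinarith
  refine ⟨(∫ y in S, 2 ^ p / ‖y‖ ^ p) + ∫ z : E, 2 ^ (p + 1) / (1 + ‖z‖ ^ p),
    fun x hx => ?_⟩
  have h2x : Integrable (fun y : E => 2 ^ (p + 1) / (1 + ‖x + y‖ ^ p)) := h2.comp_add_left x
  calc (∫ y in S, (1 + ‖x‖ ^ p) / ((1 + ‖x + y‖ ^ p) * ‖y‖ ^ p))
      ≤ ∫ y in S, (2 ^ p / ‖y‖ ^ p + 2 ^ (p + 1) / (1 + ‖x + y‖ ^ p)) := by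
        refine integral_mono_of_nonneg (Filter.Eventually.of_forall fun y => by positivity)
          (h1.add h2x.integrableOn)
          ((ae_restrict_iff' hSmeas).mpr (Filter.Eventually.of_forall fun y hy => ?_))
        have hy1 : (1 : ℝ) ≤ ‖y‖ := hy
        have htri : ‖x‖ ≤ ‖x + y‖ + ‖y‖ := by
          simpa using norm_add_le (x + y) (-y)
        exact pointwise_aux p ‖x‖ ‖x + y‖ ‖y‖ hp0 hx (norm_nonneg _) hy1 htri
    _ = (∫ y in S, 2 ^ p / ‖y‖ ^ p) + ∫ y in S, 2 ^ (p + 1) / (1 + ‖x + y‖ ^ p) :=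
        integral_add h1 h2x.integrableOn
    _ ≤ (∫ y in S, 2 ^ p / ‖y‖ ^ p) + ∫ y : E, 2 ^ (p + 1) / (1 + ‖x + y‖ ^ p) :=
        add_le_add_right (setIntegral_le_integral h2x
          (Filter.Eventually.of_forall fun y => by positivity)) _
    _ = (∫ y in S, 2 ^ p / ‖y‖ ^ p) + ∫ z : E, 2 ^ (p + 1) / (1 + ‖z‖ ^ p) := by
        rw [integral_add_left_eq_self (fun z : E => 2 ^ (p + 1) / (1 + ‖z‖ ^ p)) x]
end

section
/- Let N ∈ ℕ, s > 0, and let f ∈ L^∞(B) where B is the open unit ball of ℝ^N. Define G_s by Boggio's formula: G_s(x,y) = k_{N,s}|x−y|^{2s−N} ∫_0^{ρ(x,y)} v^{s−1}(v+1)^{−N/2} dv with ρ(x,y) = (1−|x|²)₊(1−|y|²)₊/|x−y|², and u(x) := ∫_B G_s(x,y) f(y) dy. Then there is a constant C = C(N,s) such that ‖u‖_{L^∞(B)} ≤ C ‖f‖_{L^∞(B)}. -/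
open MeasureTheory

open Metric Set in
lemma integrableOn_rpow_norm_ball_two (N : ℕ) (hN : 0 < N) {p : ℝ} (hp : -(N:ℝ) < p) (hp0 : p ≤ 0) :
    IntegrableOn (fun y : EuclideanSpace ℝ (Fin N) => ‖y‖ ^ p) (Metric.ball 0 2) := by
  haveI : Nonempty (Fin N) := Fin.pos_iff_nonempty.mp hN
  set E := EuclideanSpace ℝ (Fin N)
  have hmeas : AEStronglyMeasurable (fun y : E => ‖y‖ ^ p) volume :=
    (measurable_norm.pow_const p).aestronglyMeasurable
  set A : ℕ → Set E := fun n => {y : E | (2:ℝ)⁻¹ ^ n ≤ ‖y‖} ∩ Metric.ball 0 (2 * (2:ℝ)⁻¹ ^ n) with hA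
  have hAm : ∀ n, MeasurableSet (A n) := fun n =>
    (measurable_norm measurableSet_Ici).inter measurableSet_ball
  have hAfin : ∀ n, volume (A n) ≠ ⊤ := fun n =>
    ((measure_mono (inter_subset_right)).trans_lt measure_ball_lt_top).ne
  -- covering
  have hcover : Metric.ball (0:E) 2 ⊆ {0} ∪ ⋃ n, A n := by
    intro y hy
    rw [mem_ball_zero_iff] at hy
    rcases eq_or_ne y 0 with h0 | h0
    · exact Or.inl (by simp [h0])
    · right
      have hy0 : 0 < ‖y‖ := norm_pos_iff.mpr h0
      have hex : ∃ n : ℕ, (2:ℝ)⁻¹ ^ n ≤ ‖y‖ := by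
        obtain ⟨n, hn⟩ := exists_pow_lt_of_lt_one hy0 (by norm_num : (2:ℝ)⁻¹ < 1)
        exact ⟨n, hn.le⟩
      classical
      set k := Nat.find hex with hk
      refine mem_iUnion.mpr ⟨k, Nat.find_spec hex, ?_⟩
      rw [mem_ball_zero_iff]
      rcases Nat.eq_zero_or_pos k with hk0 | hkpos
      · simpa [hk0] using hy
      · obtain ⟨j, hj⟩ := Nat.exists_eq_succ_of_ne_zero hkpos.ne'
        have := Nat.find_min hex (m := j) (by omega)
        push_neg at this
        calc ‖y‖ < (2:ℝ)⁻¹ ^ j := this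
        _ = 2 * (2:ℝ)⁻¹ ^ k := by rw [hj, pow_succ]; ring
  -- integrability on each annulus
  have hint : ∀ n, IntegrableOn (fun y : E => ‖y‖ ^ p) (A n) volume := by
    intro n
    refine Measure.integrableOn_of_bounded (hAfin n) hmeas
      (M := ((2:ℝ)⁻¹ ^ n) ^ p) ?_
    refine (ae_restrict_iff' (hAm n)).mpr (ae_of_all _ fun y hy => ?_)
    have h1 : (2:ℝ)⁻¹ ^ n ≤ ‖y‖ := hy.1
    have h2 : (0:ℝ) < (2:ℝ)⁻¹ ^ n := by positivity
    rw [Real.norm_eq_abs, abs_of_nonneg (Real.rpow_nonneg (norm_nonneg _) _)]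
    exact Real.rpow_le_rpow_of_nonpos h2 h1 hp0
  -- summability
  have hb : ∀ n, ∫ y in A n, ‖(‖y‖ : ℝ) ^ p‖ ≤
      (((2:ℝ)⁻¹ ^ p * (2:ℝ)⁻¹ ^ (N:ℕ)) ^ n) * (2 ^ (N:ℕ) * (volume (Metric.ball (0:E) 1)).toReal) := by
    intro n
    have hμ : (volume (A n)).toReal ≤ (2 * (2:ℝ)⁻¹ ^ n) ^ (N:ℕ) * (volume (Metric.ball (0:E) 1)).toReal := by
      have h1 : volume (A n) ≤ volume (Metric.ball (0:E) (2 * (2:ℝ)⁻¹ ^ n)) :=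
        measure_mono inter_subset_right
      have h2 : volume (Metric.ball (0:E) (2 * (2:ℝ)⁻¹ ^ n)) =
          ENNReal.ofReal ((2 * (2:ℝ)⁻¹ ^ n) ^ Module.finrank ℝ E) * volume (Metric.ball (0:E) 1) :=
        Measure.addHaar_ball volume 0 (by positivity)
      have h3 := ENNReal.toReal_mono (by
        rw [h2]; exact ENNReal.mul_ne_top ENNReal.ofReal_ne_top measure_ball_lt_top.ne) h1
      rw [h2, ENNReal.toReal_mul, ENNReal.toReal_ofReal (by positivity)] at h3
      simpa [E, finrank_euclideanSpace_fin] using h3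
    have hbd : ∫ y in A n, ‖(‖y‖ : ℝ) ^ p‖ ≤ ((2:ℝ)⁻¹ ^ n) ^ p * (volume (A n)).toReal := by
      have := norm_setIntegral_le_of_norm_le_const (f := fun y : E => ‖(‖y‖:ℝ) ^ p‖) (C := ((2:ℝ)⁻¹ ^ n) ^ p)
        ((hAfin n).lt_top) (fun y (hy : y ∈ A n) => by
          rw [norm_norm, Real.norm_eq_abs, abs_of_nonneg (Real.rpow_nonneg (norm_nonneg _) _)]
          exact Real.rpow_le_rpow_of_nonpos (by positivity) hy.1 hp0)
      calc ∫ y in A n, ‖(‖y‖ : ℝ) ^ p‖ ≤ ‖∫ y in A n, ‖(‖y‖ : ℝ) ^ p‖‖ := le_abs_self _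
      _ ≤ ((2:ℝ)⁻¹ ^ n) ^ p * (volume (A n)).toReal := this
    have heq : ((2:ℝ)⁻¹ ^ n) ^ p * ((2 * (2:ℝ)⁻¹ ^ n) ^ (N:ℕ) * (volume (Metric.ball (0:E) 1)).toReal)
        = (((2:ℝ)⁻¹ ^ p * (2:ℝ)⁻¹ ^ (N:ℕ)) ^ n) * (2 ^ (N:ℕ) * (volume (Metric.ball (0:E) 1)).toReal) := by
      have h1 : ((2:ℝ)⁻¹ ^ n) ^ p = ((2:ℝ)⁻¹ ^ p) ^ n := by
        rw [← Real.rpow_natCast (2:ℝ)⁻¹ n, ← Real.rpow_natCast ((2:ℝ)⁻¹ ^ p) n,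
          ← Real.rpow_mul (by norm_num), ← Real.rpow_mul (by norm_num), mul_comm]
      rw [h1]; ring
    calc ∫ y in A n, ‖(‖y‖ : ℝ) ^ p‖ ≤ ((2:ℝ)⁻¹ ^ n) ^ p * (volume (A n)).toReal := hbd
    _ ≤ ((2:ℝ)⁻¹ ^ n) ^ p * ((2 * (2:ℝ)⁻¹ ^ n) ^ (N:ℕ) * (volume (Metric.ball (0:E) 1)).toReal) :=
        mul_le_mul_of_nonneg_left hμ (by positivity)
    _ = _ := heq
  have hr : (2:ℝ)⁻¹ ^ p * (2:ℝ)⁻¹ ^ (N:ℕ) < 1 := by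
    rw [← Real.rpow_natCast (2:ℝ)⁻¹ N, ← Real.rpow_add (by norm_num)]
    exact Real.rpow_lt_one (by norm_num) (by norm_num) (by linarith)
  have hsum : Summable fun n : ℕ => ∫ y in A n, ‖(‖y‖ : ℝ) ^ p‖ := by
    refine Summable.of_nonneg_of_le (fun n => integral_nonneg fun y => norm_nonneg _) hb ?_
    exact (summable_geometric_of_lt_one (by positivity) hr).mul_right _
  have hU : IntegrableOn (fun y : E => ‖y‖ ^ p) (⋃ n, A n) volume :=
    integrableOn_iUnion_of_summable_integral_norm hint hsum
  have h0 : IntegrableOn (fun y : E => ‖y‖ ^ p) {0} volume := by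
    refine Measure.integrableOn_of_bounded (μ := volume) (s := ({0} : Set E)) ?_ hmeas (M := 1) ?_
    · exact ((measure_mono (singleton_subset_iff.mpr (mem_ball_self one_pos))).trans_lt
        measure_ball_lt_top).ne
    · refine (ae_restrict_iff' (measurableSet_singleton 0)).mpr (ae_of_all _ fun y hy => ?_)
      rcases hy with rfl
      rcases eq_or_lt_of_le hp0 with h | h
      · simp [h]
      · simp [Real.zero_rpow h.ne]
  exact ((h0.union hU).mono_set hcover)

open Metric Set in
lemma boggioConst_pos (N : ℕ) (hN : 0 < N) {s : ℝ} (hs : 0 < s) : 0 < boggioConst N s := by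
  have h1 : 0 < Real.Gamma ((N:ℝ)/2) := Real.Gamma_pos_of_pos (by positivity)
  have h2 : 0 < Real.Gamma s := Real.Gamma_pos_of_pos hs
  have h3 : (0:ℝ) < Real.pi ^ ((N:ℝ)/2) := Real.rpow_pos_of_pos Real.pi_pos _
  have h4 : (0:ℝ) < (4:ℝ) ^ s := Real.rpow_pos_of_pos (by norm_num) _
  exact div_pos h1 (by positivity)


open Metric Set in
lemma boggioG_pointwise_bound (N : ℕ) (hN : 0 < N) {s δ : ℝ} (hs : 0 < s) (hδ : 0 < δ)
    (hδs : δ < s) (hδN : δ ≤ (N:ℝ)/2) (x y : EuclideanSpace ℝ (Fin N)) (hxy : y ≠ x) :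
    |boggioG N s x y| ≤ boggioConst N s / (s - δ) * ‖x - y‖ ^ (2*δ - N) := by
  have hk := boggioConst_pos N hN hs
  have hR0 : 0 < ‖x - y‖ := by
    rw [norm_sub_pos_iff]; exact hxy.symm
  set R := ‖x - y‖ with hRdef
  have hρ0 : 0 ≤ boggioRho x y := by
    unfold boggioRho
    have := le_max_right (1 - ‖x‖ ^ 2) 0
    have := le_max_right (1 - ‖y‖ ^ 2) 0
    positivity
  have hρle : boggioRho x y ≤ (R^2)⁻¹ := by
    unfold boggioRho
    rw [div_le_iff₀ (by positivity)]
    have hx1 : max (1 - ‖x‖ ^ 2) 0 ≤ 1 := max_le (by nlinarith [sq_nonneg ‖x‖]) zero_le_one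
    have hy1 : max (1 - ‖y‖ ^ 2) 0 ≤ 1 := max_le (by nlinarith [sq_nonneg ‖y‖]) zero_le_one
    have : max (1 - ‖x‖ ^ 2) 0 * max (1 - ‖y‖ ^ 2) 0 ≤ 1 :=
      mul_le_one₀ hx1 (le_max_right _ _) hy1
    calc max (1 - ‖x‖ ^ 2) 0 * max (1 - ‖y‖ ^ 2) 0 ≤ 1 := this
    _ = (R^2)⁻¹ * R^2 := by rw [inv_mul_cancel₀ (by positivity)]
  have hsδ : 0 < s - δ := sub_pos.mpr hδs
  set ρ := boggioRho x y with hρdef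
  -- bound on the inner integral
  have hinner : |∫ v in (0:ℝ)..ρ, v ^ (s - 1) * (v + 1) ^ (-((N : ℝ) / 2))| ≤
      ρ ^ (s - δ) / (s - δ) := by
    have hig : IntegrableOn (fun v : ℝ => v ^ (s-1-δ)) (Set.Ioc 0 ρ) volume :=
      (intervalIntegral.intervalIntegrable_rpow' (by linarith)).1
    rw [intervalIntegral.integral_of_le hρ0]
    calc |∫ v in Set.Ioc (0:ℝ) ρ, v ^ (s - 1) * (v + 1) ^ (-((N : ℝ) / 2))|
        ≤ ∫ v in Set.Ioc (0:ℝ) ρ, |v ^ (s - 1) * (v + 1) ^ (-((N : ℝ) / 2))| :=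
          by simpa only [Real.norm_eq_abs] using
            norm_integral_le_integral_norm (μ := volume.restrict (Set.Ioc 0 ρ))
              (fun v => v ^ (s - 1) * (v + 1) ^ (-((N : ℝ) / 2)))
    _ ≤ ∫ v in Set.Ioc (0:ℝ) ρ, v ^ (s-1-δ) := by
        refine integral_mono_of_nonneg (ae_of_all _ fun v => abs_nonneg _) hig ?_
        refine (ae_restrict_iff' measurableSet_Ioc).mpr (ae_of_all _ fun v hv => ?_)
        have hv0 : 0 < v := hv.1
        show |v ^ (s - 1) * (v + 1) ^ (-((N : ℝ) / 2))| ≤ v ^ (s-1-δ)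
        rw [abs_of_nonneg (mul_nonneg (Real.rpow_nonneg hv0.le _)
          (Real.rpow_nonneg (by linarith) _))]
        have h1 : (v+1) ^ (-((N:ℝ)/2)) ≤ v ^ (-δ) := by
          rw [Real.rpow_neg (by linarith), Real.rpow_neg hv0.le]
          refine inv_anti₀ (Real.rpow_pos_of_pos hv0 δ) ?_
          calc v ^ δ ≤ (v+1) ^ δ := Real.rpow_le_rpow hv0.le (by linarith) hδ.le
          _ ≤ (v+1) ^ ((N:ℝ)/2) := Real.rpow_le_rpow_of_exponent_le (by linarith) hδN
        calc v ^ (s-1) * (v + 1) ^ (-((N : ℝ) / 2)) ≤ v ^ (s-1) * v ^ (-δ) :=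
            mul_le_mul_of_nonneg_left h1 (Real.rpow_nonneg hv0.le _)
        _ = v ^ (s-1-δ) := by rw [← Real.rpow_add hv0]; ring_nf
    _ = ρ ^ (s - δ) / (s - δ) := by
        rw [← intervalIntegral.integral_of_le hρ0, integral_rpow (Or.inl (by linarith))]
        have he : s - 1 - δ + 1 = s - δ := by ring
        rw [he, Real.zero_rpow hsδ.ne', sub_zero]
  -- combine
  have hpow : R ^ (2*s - N) * ((R^2)⁻¹ ^ (s - δ)) = R ^ (2*δ - N) := by
    have e1 : ((R^2)⁻¹ : ℝ) = R ^ ((-2:ℝ)) := by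
      rw [← Real.rpow_natCast R 2, ← Real.rpow_neg hR0.le]
      norm_num
    rw [e1, ← Real.rpow_mul hR0.le, ← Real.rpow_add hR0]
    congr 1
    ring
  calc |boggioG N s x y| = boggioConst N s * R ^ (2*s - N) *
      |∫ v in (0:ℝ)..ρ, v ^ (s - 1) * (v + 1) ^ (-((N : ℝ) / 2))| := by
        rw [boggioG, abs_mul, abs_mul, abs_of_nonneg hk.le,
          abs_of_nonneg (Real.rpow_nonneg hR0.le _)]
  _ ≤ boggioConst N s * R ^ (2*s - N) * (ρ ^ (s - δ) / (s - δ)) := by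
      exact mul_le_mul_of_nonneg_left hinner
        (mul_nonneg hk.le (Real.rpow_nonneg hR0.le _))
  _ ≤ boggioConst N s * R ^ (2*s - N) * (((R^2)⁻¹) ^ (s - δ) / (s - δ)) := by
      refine mul_le_mul_of_nonneg_left ?_ (mul_nonneg hk.le (Real.rpow_nonneg hR0.le _))
      have h2 : ρ ^ (s - δ) ≤ ((R^2)⁻¹) ^ (s - δ) := Real.rpow_le_rpow hρ0 hρle hsδ.le
      gcongr
  _ = boggioConst N s / (s - δ) * R ^ (2*δ - N) := by
      rw [← hpow]; field_simp

open Metric Set in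
theorem green_potential_Linfty_bound
    (N : ℕ) (hN : 0 < N) (s : ℝ) (hs : 0 < s) :
    ∃ C : ℝ, ∀ (f : EuclideanSpace ℝ (Fin N) → ℝ) (M : ℝ),
      (∀ y ∈ Metric.ball (0 : EuclideanSpace ℝ (Fin N)) 1, |f y| ≤ M) →
      ∀ x ∈ Metric.ball (0 : EuclideanSpace ℝ (Fin N)) 1,
        |∫ y in Metric.ball (0 : EuclideanSpace ℝ (Fin N)) 1, boggioG N s x y * f y| ≤ C * M := by
  haveI : Nonempty (Fin N) := Fin.pos_iff_nonempty.mp hN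
  set E := EuclideanSpace ℝ (Fin N) with hE
  set δ := min s (N:ℝ) / 2 with hδdef
  have hNpos : (0:ℝ) < N := Nat.cast_pos.mpr hN
  have hδ : 0 < δ := div_pos (lt_min hs hNpos) two_pos
  have hδs : δ < s := by
    rcases le_total s (N:ℝ) with h | h
    · rw [hδdef, min_eq_left h]; linarith
    · rw [hδdef, min_eq_right h]; linarith
  have hδN : δ ≤ (N:ℝ)/2 := by
    rw [hδdef]; gcongr; exact min_le_right _ _
  set p := 2*δ - N with hpdef
  have hp : -(N:ℝ) < p := by rw [hpdef]; linarith
  have hp0 : p ≤ 0 := by rw [hpdef]; linarith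
  have hk := boggioConst_pos N hN hs
  have hsδ : 0 < s - δ := sub_pos.mpr hδs
  set C' := boggioConst N s / (s - δ) with hC'
  have hC'0 : 0 ≤ C' := div_nonneg hk.le hsδ.le
  have hIone : IntegrableOn (fun z : E => ‖z‖ ^ p) (ball 0 2) volume :=
    integrableOn_rpow_norm_ball_two N hN hp hp0
  set I := ∫ z in ball (0:E) 2, ‖z‖ ^ p with hI
  refine ⟨C' * I, ?_⟩
  intro f M hf x hx
  have hM : 0 ≤ M := (abs_nonneg _).trans (hf 0 (mem_ball_self one_pos))
  have hind : Integrable (fun z : E => Set.indicator (ball (0:E) 2) (fun z => ‖z‖ ^ p) z) volume :=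
    (integrable_indicator_iff measurableSet_ball).mpr hIone
  have hcomp : Integrable
      (fun y : E => Set.indicator (ball (0:E) 2) (fun z => ‖z‖ ^ p) (x - y)) volume :=
    hind.comp_sub_left x
  have hfun : (fun y : E => Set.indicator (ball (0:E) 2) (fun z => ‖z‖ ^ p) (x - y)) =
      Set.indicator (ball x 2) (fun y : E => ‖x - y‖ ^ p) := by
    funext y
    by_cases hy : y ∈ ball x 2
    · have h1 : x - y ∈ ball (0:E) 2 := by
        rw [mem_ball_zero_iff, ← dist_eq_norm, dist_comm]
        exact mem_ball.mp hy
      rw [Set.indicator_of_mem h1, Set.indicator_of_mem hy]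
    · have h1 : x - y ∉ ball (0:E) 2 := by
        rw [mem_ball_zero_iff, ← dist_eq_norm, dist_comm]
        exact fun hc => hy (mem_ball.mpr hc)
      rw [Set.indicator_of_notMem h1, Set.indicator_of_notMem hy]
  have hIball : IntegrableOn (fun y : E => ‖x - y‖ ^ p) (ball x 2) volume :=
    (integrable_indicator_iff measurableSet_ball).mp (hfun ▸ hcomp)
  have hsub : ball (0:E) 1 ⊆ ball x 2 := by
    intro y hy
    rw [mem_ball] at hy ⊢
    have hx' : dist x 0 < 1 := mem_ball.mp hx
    calc dist y x ≤ dist y 0 + dist 0 x := dist_triangle _ _ _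
    _ = dist y 0 + dist x 0 := by rw [dist_comm (0:E) x]
    _ < 2 := by linarith
  have hIball1 : IntegrableOn (fun y : E => ‖x - y‖ ^ p) (ball (0:E) 1) volume :=
    hIball.mono_set hsub
  have hxnull : ∀ᵐ y : E ∂volume.restrict (ball (0:E) 1), y ≠ x := by
    refine ae_restrict_of_ae ?_
    rw [ae_iff]
    have : {y : E | ¬ y ≠ x} = {x} := by ext y; simp
    rw [this]
    exact measure_singleton x
  have hae : ∀ᵐ y ∂volume.restrict (ball (0:E) 1),
      |boggioG N s x y * f y| ≤ C' * M * ‖x - y‖ ^ p := by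
    filter_upwards [hxnull, ae_restrict_mem measurableSet_ball] with y hyx hyB
    rw [abs_mul]
    refine le_trans (mul_le_mul (boggioG_pointwise_bound N hN hs hδ hδs hδN x y hyx)
      (hf y hyB) (abs_nonneg _)
      (mul_nonneg hC'0 (Real.rpow_nonneg (norm_nonneg _) _))) (le_of_eq (by ring))
  calc |∫ y in ball (0:E) 1, boggioG N s x y * f y|
      ≤ ∫ y in ball (0:E) 1, |boggioG N s x y * f y| := by
        simpa only [Real.norm_eq_abs] using
          norm_integral_le_integral_norm (μ := volume.restrict (ball (0:E) 1))
            (fun y => boggioG N s x y * f y)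
  _ ≤ ∫ y in ball (0:E) 1, C' * M * ‖x - y‖ ^ p :=
      integral_mono_of_nonneg (ae_of_all _ fun y => abs_nonneg _)
        (hIball1.const_mul (C'*M)) hae
  _ = C' * M * ∫ y in ball (0:E) 1, ‖x - y‖ ^ p := by
      rw [MeasureTheory.integral_const_mul]
  _ ≤ C' * M * I := by
      refine mul_le_mul_of_nonneg_left ?_ (mul_nonneg hC'0 hM)
      have hmono : ∫ y in ball (0:E) 1, ‖x - y‖ ^ p ≤ ∫ y in ball x 2, ‖x - y‖ ^ p := by
        refine setIntegral_mono_set hIball ?_ ?_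
        · exact ae_of_all _ fun y => Real.rpow_nonneg (norm_nonneg _) _
        · exact HasSubset.Subset.eventuallyLE hsub
      have heqI : ∫ y in ball x 2, ‖x - y‖ ^ p = I := by
        have h1 : ∫ y in ball x 2, ‖x - y‖ ^ p
            = ∫ y, Set.indicator (ball x 2) (fun y : E => ‖x - y‖ ^ p) y := by
          rw [integral_indicator measurableSet_ball]
        have h2 : (∫ y, Set.indicator (ball x 2) (fun y : E => ‖x - y‖ ^ p) y)
            = ∫ y, Set.indicator (ball (0:E) 2) (fun z : E => ‖z‖ ^ p) (x - y) := by
          rw [← hfun]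
        have h3 : (∫ y, Set.indicator (ball (0:E) 2) (fun z : E => ‖z‖ ^ p) (x - y))
            = ∫ z, Set.indicator (ball (0:E) 2) (fun z : E => ‖z‖ ^ p) z :=
          integral_sub_left_eq_self _ volume x
        have h4 : (∫ z, Set.indicator (ball (0:E) 2) (fun z : E => ‖z‖ ^ p) z) = I := by
          rw [integral_indicator measurableSet_ball]
        rw [h1, h2, h3, h4]
      exact hmono.trans (le_of_eq heqI)
  _ = C' * I * M := by ring
end
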